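/- The set 𝔔_nqm of norm quasi-mixing quadratic stochastic operators equals the union over n ≥ 1 of the sets { Q ∈ 𝔔 : sup_{f,g,h∈𝒟} ‖P_f^{[0,n]}(g) − P_f^{[0,n]}(h)‖₁ < 2 }. -/

import Mathlib

open MeasureTheory Filter Topology

noncomputable section

/-- The set of densities in `L¹(μ)`. -/
def Density {X : Type*} [MeasurableSpace X] (μ : Measure X) : Set (Lp ℝ 1 μ) :=
  {f | 0 ≤ f ∧ ‖f‖ = 1}

/-- `Q : L¹ × L¹ → L¹` is a quadratic stochastic operator: bilinear, positivity preserving,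
symmetric and `‖Q(f,g)‖₁ = ‖f‖₁ ‖g‖₁` for `f, g ≥ 0`. -/
structure IsQSO {X : Type*} [MeasurableSpace X] (μ : Measure X)
    (Q : Lp ℝ 1 μ → Lp ℝ 1 μ → Lp ℝ 1 μ) : Prop where
  add_left : ∀ f f' g, Q (f + f') g = Q f g + Q f' g
  smul_left : ∀ (c : ℝ) f g, Q (c • f) g = c • Q f g
  add_right : ∀ f g g', Q f (g + g') = Q f g + Q f g'
  smul_right : ∀ (c : ℝ) f g, Q f (c • g) = c • Q f g
  nonneg : ∀ f g, 0 ≤ f → 0 ≤ g → 0 ≤ Q f g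
  symm : ∀ f g, Q f g = Q g f
  norm_mul : ∀ f g, 0 ≤ f → 0 ≤ g → ‖Q f g‖ = ‖f‖ * ‖g‖

/-- The quadratic map `ℚ(f) = Q(f,f)`. -/
def QQ {X : Type*} [MeasurableSpace X] {μ : Measure X}
    (Q : Lp ℝ 1 μ → Lp ℝ 1 μ → Lp ℝ 1 μ) (f : Lp ℝ 1 μ) : Lp ℝ 1 μ := Q f f

/-- The iterates `ℚⁿ`. -/
def Qiter {X : Type*} [MeasurableSpace X] {μ : Measure X}
    (Q : Lp ℝ 1 μ → Lp ℝ 1 μ → Lp ℝ 1 μ) (n : ℕ) : Lp ℝ 1 μ → Lp ℝ 1 μ := (QQ Q)^[n]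

/-- `Pchain Q f n = P_f^{[0,n]}`, the nonhomogeneous Markov chain associated with `Q`
and the density `f`, i.e. `P_f^{[0,0]} = id` and
`P_f^{[0,n+1]}(g) = Q(ℚⁿ(f), P_f^{[0,n]}(g))`. -/
def Pchain {X : Type*} [MeasurableSpace X] {μ : Measure X}
    (Q : Lp ℝ 1 μ → Lp ℝ 1 μ → Lp ℝ 1 μ) (f : Lp ℝ 1 μ) :
    ℕ → Lp ℝ 1 μ → Lp ℝ 1 μ
  | 0 => id
  | n + 1 => fun g => Q (Qiter Q n f) (Pchain Q f n g)

/-- The metric `d_u(Q₁,Q₂) = sup_{f ∈ 𝒟} ‖ℚ₁(f) - ℚ₂(f)‖₁`. -/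
def du {X : Type*} [MeasurableSpace X] (μ : Measure X)
    (Q₁ Q₂ : Lp ℝ 1 μ → Lp ℝ 1 μ → Lp ℝ 1 μ) : ℝ :=
  ⨆ f : Density μ, ‖Q₁ f f - Q₂ f f‖

/-- The metric `d̂_u(Q₁,Q₂) = sup_{f,g ∈ 𝒟} ‖Q₁(f,g) - Q₂(f,g)‖₁`. -/
def dhat {X : Type*} [MeasurableSpace X] (μ : Measure X)
    (Q₁ Q₂ : Lp ℝ 1 μ → Lp ℝ 1 μ → Lp ℝ 1 μ) : ℝ :=
  ⨆ f : Density μ, ⨆ g : Density μ, ‖Q₁ f g - Q₂ f g‖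

/-- `supDiff μ Q n = sup_{f,g,h ∈ 𝒟} ‖P_f^{[0,n]}(g) - P_f^{[0,n]}(h)‖₁`. -/
def supDiff {X : Type*} [MeasurableSpace X] (μ : Measure X)
    (Q : Lp ℝ 1 μ → Lp ℝ 1 μ → Lp ℝ 1 μ) (n : ℕ) : ℝ :=
  ⨆ f : Density μ, ⨆ g : Density μ, ⨆ h : Density μ,
    ‖Pchain Q f n g - Pchain Q f n h‖

/-- `Q` is norm quasi-mixing. -/
def NormQuasiMixing {X : Type*} [MeasurableSpace X] (μ : Measure X)
    (Q : Lp ℝ 1 μ → Lp ℝ 1 μ → Lp ℝ 1 μ) : Prop :=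
  Tendsto (fun n => supDiff μ Q n) atTop (𝓝 0)

/-- `Q` is norm mixing (uniformly asymptotically stable). -/
def NormMixing {X : Type*} [MeasurableSpace X] (μ : Measure X)
    (Q : Lp ℝ 1 μ → Lp ℝ 1 μ → Lp ℝ 1 μ) : Prop :=
  ∃ f ∈ Density μ,
    Tendsto (fun n => ⨆ g : Density μ, ‖Qiter Q n g - f‖) atTop (𝓝 0)

end


noncomputable section AuxProofs

open MeasureTheory Filter Topology

variable {X : Type*} [MeasurableSpace X] {μ : Measure X}
  {Q : Lp ℝ 1 μ → Lp ℝ 1 μ → Lp ℝ 1 μ}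

/-- For a nonnegative element of `L¹`, the norm is the integral. -/
lemma aux_norm_eq_int (v : Lp ℝ 1 μ) (hv : 0 ≤ v) : ‖v‖ = ∫ x, v x ∂μ := by
  rw [L1.norm_eq_integral_norm]
  refine integral_congr_ae ?_
  filter_upwards [(Lp.coeFn_nonneg v).mpr hv] with x hx
  simpa [Real.norm_eq_abs] using abs_of_nonneg hx

lemma aux_norm_add (a b : Lp ℝ 1 μ) (ha : 0 ≤ a) (hb : 0 ≤ b) :
    ‖a + b‖ = ‖a‖ + ‖b‖ := by
  rw [aux_norm_eq_int _ (add_nonneg ha hb), aux_norm_eq_int a ha, aux_norm_eq_int b hb,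
    integral_congr_ae (Lp.coeFn_add a b)]
  exact integral_add (L1.integrable_coeFn a) (L1.integrable_coeFn b)

lemma aux_norm_posneg (u : Lp ℝ 1 μ) : ‖u‖ = ‖u⁺‖ + ‖u⁻‖ := by
  rw [← aux_norm_add _ _ (posPart_nonneg u) (negPart_nonneg u), posPart_add_negPart,
    norm_abs_eq_norm]

lemma aux_int_eq (u : Lp ℝ 1 μ) : ∫ x, u x ∂μ = ‖u⁺‖ - ‖u⁻‖ := by
  rw [aux_norm_eq_int _ (posPart_nonneg u), aux_norm_eq_int _ (negPart_nonneg u),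
    ← integral_sub (L1.integrable_coeFn _) (L1.integrable_coeFn _)]
  refine integral_congr_ae ?_
  have h := Lp.coeFn_sub (u⁺) (u⁻)
  have h2 : u⁺ - u⁻ = u := posPart_sub_negPart u
  rw [h2] at h
  filter_upwards [h] with x hx
  simpa [Pi.sub_apply] using hx

lemma aux_mem_int {g : Lp ℝ 1 μ} (hg : g ∈ Density μ) : ∫ x, g x ∂μ = 1 := by
  rw [← aux_norm_eq_int g hg.1]; exact hg.2

/-- `0 ≤ t • v` for `0 ≤ t`, `0 ≤ v`. -/
lemma aux_smul_nonneg (t : ℝ) (v : Lp ℝ 1 μ) (ht : 0 ≤ t) (hv : 0 ≤ v) : 0 ≤ t • v := by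
  rw [← Lp.coeFn_nonneg]
  filter_upwards [Lp.coeFn_smul t v, (Lp.coeFn_nonneg v).mpr hv] with x h1 h2
  have : (0 : ℝ) ≤ t * v x := mul_nonneg ht (by simpa using h2)
  simpa [h1] using this

/-- The Dobrushin-type contraction: a linear map which maps any pair of densities to
elements at distance at most `δ` contracts zero-mean differences by `δ/2`. -/
lemma aux_contract (T : Lp ℝ 1 μ → Lp ℝ 1 μ)
    (hadd : ∀ a b, T (a + b) = T a + T b)
    (hsmul : ∀ (c : ℝ) a, T (c • a) = c • T a)
    {δ : ℝ} (hδ : 0 ≤ δ)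
    (hT : ∀ g ∈ Density μ, ∀ h ∈ Density μ, ‖T g - T h‖ ≤ δ)
    {g h : Lp ℝ 1 μ} (hg : g ∈ Density μ) (hh : h ∈ Density μ) :
    ‖T g - T h‖ ≤ δ / 2 * ‖g - h‖ := by
  have hTsub : ∀ a b, T (a - b) = T a - T b := by
    intro a b
    have : T (a + (-1 : ℝ) • b) = T a + (-1 : ℝ) • T b := by rw [hadd, hsmul]
    simpa [sub_eq_add_neg, neg_one_smul] using this
  set u := g - h with hu
  rcases eq_or_ne u 0 with h0 | h0
  · have hgh : g = h := sub_eq_zero.mp h0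
    rw [hgh]
    simp only [sub_self, norm_zero]
    positivity
  · have hint : ∫ x, u x ∂μ = 0 := by
      have h1 : ∫ x, u x ∂μ = (∫ x, g x ∂μ) - ∫ x, h x ∂μ := by
        rw [hu, integral_congr_ae (Lp.coeFn_sub g h)]
        simp only [Pi.sub_apply]
        exact integral_sub (L1.integrable_coeFn g) (L1.integrable_coeFn h)
      rw [h1, aux_mem_int hg, aux_mem_int hh, sub_self]
    have heq : ‖u⁺‖ = ‖u⁻‖ := by
      have h2 := aux_int_eq u; rw [hint] at h2; linarith
    obtain ⟨c, hc⟩ : ∃ c : ℝ, c = ‖u⁺‖ := ⟨_, rfl⟩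
    have hnorm : ‖u‖ = 2 * c := by rw [aux_norm_posneg u, ← heq, ← hc]; ring
    have hcpos : 0 < c := by
      rcases (norm_nonneg (u⁺)).lt_or_eq with h' | h'
      · rwa [hc]
      · refine absurd (norm_eq_zero.mp ?_) h0
        rw [hnorm, hc, ← h']; ring
    have hg2D : c⁻¹ • (u⁺) ∈ Density μ := by
      refine ⟨aux_smul_nonneg _ _ (inv_nonneg.mpr hcpos.le) (posPart_nonneg u), ?_⟩
      rw [norm_smul, Real.norm_eq_abs, abs_of_nonneg (inv_nonneg.mpr hcpos.le), ← hc,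
        inv_mul_cancel₀ hcpos.ne']
    have hh2D : c⁻¹ • (u⁻) ∈ Density μ := by
      refine ⟨aux_smul_nonneg _ _ (inv_nonneg.mpr hcpos.le) (negPart_nonneg u), ?_⟩
      rw [norm_smul, Real.norm_eq_abs, abs_of_nonneg (inv_nonneg.mpr hcpos.le), ← heq, ← hc,
        inv_mul_cancel₀ hcpos.ne']
    have hdecomp : g - h = c • (c⁻¹ • (u⁺)) - c • (c⁻¹ • (u⁻)) := by
      rw [smul_smul, smul_smul, mul_inv_cancel₀ hcpos.ne', one_smul, one_smul,
        posPart_sub_negPart]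
    have hTgh : T g - T h = c • (T (c⁻¹ • (u⁺)) - T (c⁻¹ • (u⁻))) := by
      rw [← hTsub, hdecomp, ← smul_sub, hsmul, hTsub]
    calc ‖T g - T h‖ = c * ‖T (c⁻¹ • (u⁺)) - T (c⁻¹ • (u⁻))‖ := by
          rw [hTgh, norm_smul, Real.norm_eq_abs, abs_of_nonneg hcpos.le]
      _ ≤ c * δ := mul_le_mul_of_nonneg_left (hT _ hg2D _ hh2D) hcpos.le
      _ = δ / 2 * ‖g - h‖ := by rw [← hu, hnorm]; ring

lemma aux_QQ_mem (hQ : IsQSO μ Q) {f : Lp ℝ 1 μ} (hf : f ∈ Density μ) :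
    QQ Q f ∈ Density μ := by
  refine ⟨hQ.nonneg f f hf.1 hf.1, ?_⟩
  rw [QQ, hQ.norm_mul f f hf.1 hf.1, hf.2, one_mul]

lemma aux_Qiter_mem (hQ : IsQSO μ Q) (n : ℕ) {f : Lp ℝ 1 μ} (hf : f ∈ Density μ) :
    Qiter Q n f ∈ Density μ := by
  induction n with
  | zero => simpa [Qiter] using hf
  | succ n ih =>
    rw [Qiter, Function.iterate_succ_apply']
    exact aux_QQ_mem hQ ih

lemma aux_Pchain_mem (hQ : IsQSO μ Q) (n : ℕ) {f g : Lp ℝ 1 μ}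
    (hf : f ∈ Density μ) (hg : g ∈ Density μ) : Pchain Q f n g ∈ Density μ := by
  induction n with
  | zero => simpa [Pchain] using hg
  | succ n ih =>
    refine ⟨hQ.nonneg _ _ (aux_Qiter_mem hQ n hf).1 ih.1, ?_⟩
    show ‖Q (Qiter Q n f) (Pchain Q f n g)‖ = 1
    rw [hQ.norm_mul _ _ (aux_Qiter_mem hQ n hf).1 ih.1, (aux_Qiter_mem hQ n hf).2, ih.2,
      one_mul]

lemma aux_Pchain_add' (hQ : IsQSO μ Q) (f g : Lp ℝ 1 μ) (a b : ℕ) :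
    Pchain Q f (a + b) g = Pchain Q (Qiter Q a f) b (Pchain Q f a g) := by
  induction b with
  | zero => rfl
  | succ b ih =>
    show Q (Qiter Q (a + b) f) (Pchain Q f (a + b) g) = _
    rw [ih]
    congr 1
    show Qiter Q (a + b) f = Qiter Q b (Qiter Q a f)
    rw [Qiter, Qiter, Qiter, Nat.add_comm a b, Function.iterate_add_apply]

lemma aux_Pchain_addg (hQ : IsQSO μ Q) (f : Lp ℝ 1 μ) (n : ℕ) (g h : Lp ℝ 1 μ) :
    Pchain Q f n (g + h) = Pchain Q f n g + Pchain Q f n h := by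
  induction n with
  | zero => rfl
  | succ n ih =>
    show Q _ (Pchain Q f n (g + h)) = Q _ (Pchain Q f n g) + Q _ (Pchain Q f n h)
    rw [ih, hQ.add_right]

lemma aux_Pchain_smulg (hQ : IsQSO μ Q) (f : Lp ℝ 1 μ) (n : ℕ) (c : ℝ) (g : Lp ℝ 1 μ) :
    Pchain Q f n (c • g) = c • Pchain Q f n g := by
  induction n with
  | zero => rfl
  | succ n ih =>
    show Q _ (Pchain Q f n (c • g)) = c • Q _ (Pchain Q f n g)
    rw [ih, hQ.smul_right]

lemma aux_norm_sub_le_two {g h : Lp ℝ 1 μ} (hg : g ∈ Density μ) (hh : h ∈ Density μ) :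
    ‖g - h‖ ≤ 2 := by
  calc ‖g - h‖ ≤ ‖g‖ + ‖h‖ := norm_sub_le g h
    _ = 2 := by rw [hg.2, hh.2]; norm_num

lemma aux_supDiff_nonneg (n : ℕ) : 0 ≤ supDiff μ Q n :=
  Real.iSup_nonneg fun _ => Real.iSup_nonneg fun _ => Real.iSup_nonneg fun _ => norm_nonneg _

lemma aux_supDiff_le (hQ : IsQSO μ Q) (n : ℕ) {B : ℝ} (hB : 0 ≤ B)
    (h : ∀ f ∈ Density μ, ∀ g ∈ Density μ, ∀ h' ∈ Density μ,
      ‖Pchain Q f n g - Pchain Q f n h'‖ ≤ B) : supDiff μ Q n ≤ B :=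
  Real.iSup_le (fun f => Real.iSup_le (fun g => Real.iSup_le
    (fun h' => h f f.2 g g.2 h' h'.2) hB) hB) hB

lemma aux_supDiff_le_two (hQ : IsQSO μ Q) (n : ℕ) : supDiff μ Q n ≤ 2 :=
  aux_supDiff_le hQ n (by norm_num) fun f hf g hg h' hh' =>
    aux_norm_sub_le_two (aux_Pchain_mem hQ n hf hg) (aux_Pchain_mem hQ n hf hh')

lemma aux_le_supDiff (hQ : IsQSO μ Q) (n : ℕ) {f g h : Lp ℝ 1 μ}
    (hf : f ∈ Density μ) (hg : g ∈ Density μ) (hh : h ∈ Density μ) :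
    ‖Pchain Q f n g - Pchain Q f n h‖ ≤ supDiff μ Q n := by
  have b3 : ∀ f' g' : Density μ, BddAbove (Set.range fun h' : Density μ =>
      ‖Pchain Q (f' : Lp ℝ 1 μ) n g' - Pchain Q (f' : Lp ℝ 1 μ) n h'‖) := by
    intro f' g'
    refine ⟨2, ?_⟩
    rintro _ ⟨h', rfl⟩
    exact aux_norm_sub_le_two (aux_Pchain_mem hQ n f'.2 g'.2) (aux_Pchain_mem hQ n f'.2 h'.2)
  have b2 : ∀ f' : Density μ, BddAbove (Set.range fun g' : Density μ =>
      ⨆ h' : Density μ, ‖Pchain Q (f' : Lp ℝ 1 μ) n g' - Pchain Q (f' : Lp ℝ 1 μ) n h'‖) := by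
    intro f'
    refine ⟨2, ?_⟩
    rintro _ ⟨g', rfl⟩
    exact Real.iSup_le (fun h' => aux_norm_sub_le_two (aux_Pchain_mem hQ n f'.2 g'.2)
      (aux_Pchain_mem hQ n f'.2 h'.2)) (by norm_num)
  have b1 : BddAbove (Set.range fun f' : Density μ => ⨆ g' : Density μ, ⨆ h' : Density μ,
      ‖Pchain Q (f' : Lp ℝ 1 μ) n g' - Pchain Q (f' : Lp ℝ 1 μ) n h'‖) := by
    refine ⟨2, ?_⟩
    rintro _ ⟨f', rfl⟩
    exact Real.iSup_le (fun g' => Real.iSup_le (fun h' => aux_norm_sub_le_two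
      (aux_Pchain_mem hQ n f'.2 g'.2) (aux_Pchain_mem hQ n f'.2 h'.2)) (by norm_num))
      (by norm_num)
  calc ‖Pchain Q f n g - Pchain Q f n h‖
      ≤ ⨆ h' : Density μ, ‖Pchain Q f n g - Pchain Q f n (h' : Lp ℝ 1 μ)‖ :=
        le_ciSup (b3 ⟨f, hf⟩ ⟨g, hg⟩) ⟨h, hh⟩
    _ ≤ ⨆ g' : Density μ, ⨆ h' : Density μ,
        ‖Pchain Q f n (g' : Lp ℝ 1 μ) - Pchain Q f n (h' : Lp ℝ 1 μ)‖ :=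
        le_ciSup (b2 ⟨f, hf⟩) ⟨g, hg⟩
    _ ≤ supDiff μ Q n := le_ciSup b1 ⟨f, hf⟩

/-- Submultiplicativity: `supDiff (a + b) ≤ supDiff b / 2 * supDiff a`. -/
lemma aux_supDiff_submul (hQ : IsQSO μ Q) (a b : ℕ) :
    supDiff μ Q (a + b) ≤ supDiff μ Q b / 2 * supDiff μ Q a := by
  refine aux_supDiff_le hQ (a + b)
    (mul_nonneg (div_nonneg (aux_supDiff_nonneg b) (by norm_num)) (aux_supDiff_nonneg a)) ?_
  intro f hf g hg h hh
  rw [aux_Pchain_add' hQ f g a b, aux_Pchain_add' hQ f h a b]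
  have hfD : Qiter Q a f ∈ Density μ := aux_Qiter_mem hQ a hf
  have hgD : Pchain Q f a g ∈ Density μ := aux_Pchain_mem hQ a hf hg
  have hhD : Pchain Q f a h ∈ Density μ := aux_Pchain_mem hQ a hf hh
  have hcontr := aux_contract (Pchain Q (Qiter Q a f) b)
    (aux_Pchain_addg hQ _ b) (aux_Pchain_smulg hQ _ b) (aux_supDiff_nonneg b)
    (fun g' hg' h' hh' => aux_le_supDiff hQ b hfD hg' hh') hgD hhD
  calc ‖Pchain Q (Qiter Q a f) b (Pchain Q f a g) - Pchain Q (Qiter Q a f) b (Pchain Q f a h)‖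
      ≤ supDiff μ Q b / 2 * ‖Pchain Q f a g - Pchain Q f a h‖ := hcontr
    _ ≤ supDiff μ Q b / 2 * supDiff μ Q a :=
        mul_le_mul_of_nonneg_left (aux_le_supDiff hQ a hf hg hh)
          (div_nonneg (aux_supDiff_nonneg b) (by norm_num))

end AuxProofs

/-- The set `𝔔_nqm` of norm quasi-mixing QSOs equals the union over `n ≥ 1`
of the sets `{Q ∈ 𝔔 : sup_{f,g,h∈𝒟} ‖P_f^{[0,n]}(g) − P_f^{[0,n]}(h)‖₁ < 2}`. -/
theorem normQuasiMixing_eq_union {X : Type*} [MeasurableSpace X]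
    (μ : Measure X) [SigmaFinite μ] :
    {Q : Lp ℝ 1 μ → Lp ℝ 1 μ → Lp ℝ 1 μ | IsQSO μ Q ∧ NormQuasiMixing μ Q} =
      ⋃ n ∈ {n : ℕ | 1 ≤ n},
        {Q : Lp ℝ 1 μ → Lp ℝ 1 μ → Lp ℝ 1 μ | IsQSO μ Q ∧ supDiff μ Q n < 2} := by
  ext Q
  simp only [Set.mem_setOf_eq, Set.mem_iUnion, exists_prop]
  constructor
  · rintro ⟨hQ, hmix⟩
    have h2 : ∀ᶠ n in atTop, supDiff μ Q n < 2 :=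
      hmix.eventually (gt_mem_nhds (by norm_num : (0 : ℝ) < 2))
    obtain ⟨n, hn1, hn2⟩ := ((eventually_ge_atTop 1).and h2).exists
    exact ⟨n, hn1, hQ, hn2⟩
  · rintro ⟨n, hn1, hQ, hd⟩
    refine ⟨hQ, ?_⟩
    set r : ℝ := supDiff μ Q n / 2 with hr
    have hr0 : 0 ≤ r := div_nonneg (aux_supDiff_nonneg n) (by norm_num)
    have hr1 : r < 1 := by rw [hr]; linarith
    have hmul : ∀ k, supDiff μ Q (n * k) ≤ 2 * r ^ k := by
      intro k
      induction k with
      | zero => simpa using aux_supDiff_le_two hQ 0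
      | succ k ih =>
        have hnk : n * (k + 1) = n * k + n := by ring
        rw [hnk]
        calc supDiff μ Q (n * k + n) ≤ supDiff μ Q n / 2 * supDiff μ Q (n * k) :=
              aux_supDiff_submul hQ (n * k) n
          _ ≤ r * (2 * r ^ k) := mul_le_mul_of_nonneg_left ih hr0
          _ = 2 * r ^ (k + 1) := by ring
    have hbound : ∀ N, supDiff μ Q N ≤ 2 * r ^ (N / n) := by
      intro N
      have hdecomp : n * (N / n) + N % n = N := Nat.div_add_mod N n
      calc supDiff μ Q N = supDiff μ Q (n * (N / n) + N % n) := by rw [hdecomp]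
        _ ≤ supDiff μ Q (N % n) / 2 * supDiff μ Q (n * (N / n)) :=
            aux_supDiff_submul hQ (n * (N / n)) (N % n)
        _ ≤ 1 * (2 * r ^ (N / n)) := by
            refine mul_le_mul ?_ (hmul (N / n)) (aux_supDiff_nonneg _)
              (by norm_num)
            linarith [aux_supDiff_le_two hQ (N % n)]
        _ = 2 * r ^ (N / n) := one_mul _
    have hdiv : Tendsto (fun N : ℕ => N / n) atTop atTop := by
      refine tendsto_atTop_atTop.mpr fun b => ⟨b * n, fun N hN => ?_⟩
      exact (Nat.le_div_iff_mul_le (by omega : 0 < n)).mpr hN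
    have hgeo : Tendsto (fun N : ℕ => 2 * r ^ (N / n)) atTop (𝓝 0) := by
      have h := ((tendsto_pow_atTop_nhds_zero_of_lt_one hr0 hr1).const_mul 2).comp hdiv
      simpa [Function.comp_def] using h
    exact squeeze_zero (fun N => aux_supDiff_nonneg N) hbound hgeo
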